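/- arXiv:math/9910161 — 2 statements merged into one kernel-verified Lean document; each statement's English description precedes it below -/
import Mathlib

section
/- Let R be a subring of ℚ and let G = ⋃_{α<ω₁} G_α be a filtration of type I of an ℵ₁-free R-module G of cardinality ℵ₁. For α ≤ ω₁ let 0 → H⁰ → H_α →^{h_α} G_α → 0 be a continuous increasing chain of short exact sequences of R-modules (H_α increasing, h_α extending one another, unions at limits) with union 0 → H⁰ → H →^h G → 0, where H⁰ is isomorphic to G (hence ℵ₁-free). Then any splitting map of the sequence 0 → H⁰ → H₁ →^{h₁} G₁ → 0 has at most one extension to a splitting map of 0 → H⁰ → H →^h G → 0; that is, if σ, σ' : G → H satisfy σ∘h = σ'∘h = id_G (as maps G → G, with maps acting so that σ h means h applied after σ) and σ and σ' agree on G₁, then σ = σ'. -/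
noncomputable section

open Cardinal

universe u v

/-- `ω₁`, the first uncountable ordinal. -/
def omegaOne : Ordinal.{0} := (Cardinal.aleph 1).ord

/-- The nucleus of an abelian group `G`: the subring of `ℚ` generated by all `1/p`
(`p` prime) such that `G` is `p`-divisible. -/
def nucleus (G : Type v) [AddCommGroup G] : Subring ℚ :=
  Subring.closure
    {x : ℚ | ∃ p : ℕ, p.Prime ∧ (∀ g : G, ∃ h : G, (p : ℤ) • h = g) ∧ x = (p : ℚ)⁻¹}

/-- A torsion-free additive abelian group. -/
def TorsionFreeGrp (G : Type v) [AddCommGroup G] : Prop :=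
  ∀ (n : ℤ) (g : G), n • g = 0 → n = 0 ∨ g = 0

/-- An `R`-module `G` is a splitter if every short exact sequence
`0 → G → X → G → 0` of `R`-modules splits. -/
def IsSplitter (R : Type u) [CommRing R] (G : Type v) [AddCommGroup G] [Module R G] : Prop :=
  ∀ (X : Type v) [AddCommGroup X] [Module R X],
    ∀ (β : G →ₗ[R] X) (α : X →ₗ[R] G),
      Function.Injective β → Function.Surjective α →
        LinearMap.range β = LinearMap.ker α →
        ∃ γ : G →ₗ[R] X, α.comp γ = LinearMap.id

/-- An abelian group `G` is a splitter if every short exact sequence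
`0 → G → X → G → 0` of abelian groups splits. -/
def IsGroupSplitter (G : Type v) [AddCommGroup G] : Prop :=
  ∀ (X : Type v) [AddCommGroup X],
    ∀ (β : G →+ X) (α : X →+ G),
      Function.Injective β → Function.Surjective α →
        β.range = α.ker →
        ∃ γ : G →+ X, α.comp γ = AddMonoidHom.id G

/-- An `R`-module is `ℵ₁`-free if every countably generated submodule is free. -/
def Aleph1Free (R : Type u) [CommRing R] (G : Type v) [AddCommGroup G] [Module R G] : Prop :=
  ∀ N : Submodule R G, (∃ S : Set G, S.Countable ∧ N = Submodule.span R S) →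
    Module.Free R N

variable {R : Type u} [CommRing R] {G : Type v} [AddCommGroup G] [Module R G]

/-- A pure submodule: divisibility by `r ∈ R` inside `G` descends to `N`. -/
def IsPureSub (N : Submodule R G) : Prop :=
  ∀ (r : R) (x : G), x ∈ N → (∃ g : G, x = r • g) → ∃ y ∈ N, x = r • y

/-- `N` is pure in the submodule `M`. -/
def IsPureIn (N M : Submodule R G) : Prop :=
  ∀ (r : R) (x : G), x ∈ N → (∃ g ∈ M, x = r • g) → ∃ y ∈ N, x = r • y

/-- A torsion-free module of finite rank which is not free, while all pure submodules
of strictly smaller rank are free. -/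
def MinimalNonFree (R : Type u) [CommRing R] (M : Type v) [AddCommGroup M] [Module R M] :
    Prop :=
  NoZeroSMulDivisors R M ∧ Module.rank R M < Cardinal.aleph0 ∧ ¬ Module.Free R M ∧
    ∀ N : Submodule R M, IsPureSub N → Module.rank R N < Module.rank R M → Module.Free R N

/-- The quotient `M / N` of two submodules of `G` (with `N ≤ M` intended). -/
abbrev SubQuot (N M : Submodule R G) : Type v :=
  ↥M ⧸ N.comap M.subtype

/-- An `ℵ₁`-filtration: an increasing chain of countable submodules, indexed by `ω₁`,
continuous at limits, whose union is `G`. -/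
structure IsAleph1Filtration (c : Ordinal.{0} → Submodule R G) : Prop where
  mono : ∀ ⦃α β : Ordinal.{0}⦄, α ≤ β → β < omegaOne → c α ≤ c β
  countable : ∀ α < omegaOne, (c α : Set G).Countable
  continuous : ∀ α < omegaOne, Order.IsSuccLimit α → c α = ⨆ β ∈ Set.Iio α, c β
  union : ∀ g : G, ∃ α < omegaOne, g ∈ c α

/-- A filtration of type I. -/
def IsTypeIFiltration (c : Ordinal.{0} → Submodule R G) : Prop :=
  IsAleph1Filtration c ∧
    (∀ α < omegaOne, IsPureSub (c α) ∧ Module.Free R (c α)) ∧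
    (∀ α : Ordinal.{0}, 0 < α → α < omegaOne →
      MinimalNonFree R (SubQuot (c α) (c (α + 1))))

/-- `G` is of type I. -/
def IsTypeI (R : Type u) [CommRing R] (G : Type v) [AddCommGroup G] [Module R G] : Prop :=
  ∃ c : Ordinal.{0} → Submodule R G, IsTypeIFiltration c

/-- `G` is of type II. -/
def IsTypeII (R : Type u) [CommRing R] (G : Type v) [AddCommGroup G] [Module R G] : Prop :=
  ∃ c : Ordinal.{0} → Submodule R G,
    IsAleph1Filtration c ∧
      (∀ α < omegaOne, IsPureSub (c α) ∧ Module.Free R (c α)) ∧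
      (∀ α < omegaOne, ¬ Order.IsSuccLimit α → Aleph1Free R (G ⧸ c α))

/-- `G` is of type III. -/
def IsTypeIII (R : Type u) [CommRing R] (G : Type v) [AddCommGroup G] [Module R G] : Prop :=
  ∃ c : Ordinal.{0} → Submodule R G,
    (∀ ⦃α β : Ordinal.{0}⦄, α ≤ β → β < omegaOne → c α ≤ c β) ∧
    (∀ α < omegaOne, Order.IsSuccLimit α → c α = ⨆ β ∈ Set.Iio α, c β) ∧
    (∀ α < omegaOne, IsPureSub (c α)) ∧
    (∀ g : G, ∃ α < omegaOne, g ∈ c α) ∧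
    c 0 = ⊥ ∧
    Cardinal.mk ↥(c 1) = Cardinal.aleph 1 ∧
    (∀ α < omegaOne, ¬ Order.IsSuccLimit α → Aleph1Free R (G ⧸ c α)) ∧
    ∃ d : Ordinal.{0} → Submodule R G,
      (∀ j < omegaOne, d j ≤ c 1) ∧
      (∀ ⦃i j : Ordinal.{0}⦄, i ≤ j → j < omegaOne → d i ≤ d j) ∧
      (∀ j < omegaOne, (d j : Set G).Countable) ∧
      (∀ j < omegaOne, Order.IsSuccLimit j → d j = ⨆ i ∈ Set.Iio j, d i) ∧
      (∀ g ∈ c 1, ∃ j < omegaOne, g ∈ d j) ∧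
      (∀ j < omegaOne, IsPureIn (d j) (c 1)) ∧
      (∀ j < omegaOne, MinimalNonFree R (SubQuot (d j) (d (j + 1))))

/-- Strongly `ℵ₁`-free. -/
def StronglyAleph1Free (R : Type u) [CommRing R] (G : Type v) [AddCommGroup G]
    [Module R G] : Prop :=
  ∀ S : Set G, S.Countable →
    ∃ B : Submodule R G, S ⊆ B ∧ (B : Set G).Countable ∧ IsPureSub B ∧
      Module.Free R B ∧ Aleph1Free R (G ⧸ B)

/-- `X` is contra-Whitehead in `G`. -/
def ContraWhitehead (X : Submodule R G) : Prop :=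
  ∃ (n : ℕ) (z : ℕ → G) (p : ℕ → R) (k : Fin n → ℕ → R),
    ¬ ∃ (y : ℕ → G) (a : Fin n → G),
        (LinearIndependent R fun i => X.mkQ (a i)) ∧
        IsPureSub (Submodule.span R (Set.range fun i => X.mkQ (a i))) ∧
        ∀ m : ℕ, p m • y (m + 1) - (y m + (∑ i, k i m • a i) + z m) ∈ X

/-- A closed unbounded subset of `ω₁`. -/
def IsClubIn (C : Set Ordinal.{0}) : Prop :=
  (∀ α, α < omegaOne → Order.IsSuccLimit α →
      (∀ β < α, ∃ γ ∈ C, β ≤ γ ∧ γ < α) → α ∈ C) ∧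
    (∀ β < omegaOne, ∃ γ ∈ C, β < γ ∧ γ < omegaOne)

/-- A stationary subset of `ω₁`. -/
def IsStationaryIn (S : Set Ordinal.{0}) : Prop :=
  ∀ C : Set Ordinal.{0}, IsClubIn C → (S ∩ C).Nonempty

/-- A torsion abelian group. -/
def IsTorsionGrp (G : Type v) [AddCommGroup G] : Prop :=
  ∀ g : G, ∃ n : ℕ, 0 < n ∧ n • g = 0

/-- A divisible subgroup. -/
def IsDivisibleSub {G : Type v} [AddCommGroup G] (D : AddSubgroup G) : Prop :=
  ∀ n : ℕ, 0 < n → ∀ x ∈ D, ∃ y ∈ D, n • y = x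

/-- A cotorsion abelian group: `Ext(A, C) = 0` for every torsion-free abelian group `A`. -/
def IsCotorsion (C : Type v) [AddCommGroup C] : Prop :=
  ∀ (A : Type v) [AddCommGroup A], TorsionFreeGrp A →
    ∀ (X : Type v) [AddCommGroup X],
      ∀ (β : C →+ X) (α : X →+ A),
        Function.Injective β → Function.Surjective α → β.range = α.ker →
        ∃ γ : A →+ X, α.comp γ = AddMonoidHom.id A

section Aux

lemma homEqZeroAux {R : Type u} [CommRing R] [IsDomain R] {M N : Type v}
    [AddCommGroup M] [Module R M] [AddCommGroup N] [Module R N] [NoZeroSMulDivisors R N]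
    (hM : MinimalNonFree R M) (φ : M →ₗ[R] N)
    (hfr : Module.Free R ↥(LinearMap.range φ)) : φ = 0 := by
  obtain ⟨htf, hrk, hnf, hmin⟩ := hM
  by_contra hφ
  have hnt : Nontrivial ↥(LinearMap.range φ) := by
    obtain ⟨x, hx⟩ := DFunLike.ne_iff.mp hφ
    exact ⟨⟨φ x, LinearMap.mem_range_self φ x⟩, 0, by simpa using hx⟩
  set φ' : M →ₗ[R] ↥(LinearMap.range φ) := φ.rangeRestrict with hφ'
  have hsurj : Function.Surjective φ' := φ.surjective_rangeRestrict
  obtain ⟨s, hs⟩ := Module.projective_lifting_property φ' LinearMap.id hsurj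
  have hs' : ∀ y, φ' (s y) = y := fun y => LinearMap.congr_fun hs y
  have hsinj : Function.Injective s := by
    intro a b hab
    have := hs' a; rw [hab, hs'] at this; exact this.symm
  set f : M →ₗ[R] ↥(LinearMap.range s) := s.rangeRestrict.comp φ' with hf
  have hproj : ∀ x : ↥(LinearMap.range s), f (x : M) = x := by
    rintro ⟨x, y, rfl⟩
    ext
    simp [hf, hs' y]
  have hcompl : IsCompl (LinearMap.range s) (LinearMap.ker f) :=
    LinearMap.isCompl_of_proj hproj
  have hkerf : LinearMap.ker f = LinearMap.ker φ := by
    rw [hf, LinearMap.ker_comp,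
      LinearMap.ker_eq_bot.mpr (s.injective_rangeRestrict_iff.mpr hsinj),
      Submodule.comap_bot, hφ', LinearMap.ker_rangeRestrict]
  have equiv1 := Submodule.prodEquivOfIsCompl _ _ hcompl
  have hranks : Module.rank R ↥(LinearMap.range s) + Module.rank R ↥(LinearMap.ker f)
      ≤ Module.rank R M := by
    rw [← equiv1.rank_eq]
    exact rank_add_rank_le_rank_prod R _
  have equiv2 : ↥(LinearMap.range φ) ≃ₗ[R] ↥(LinearMap.range s) :=
    LinearEquiv.ofInjective s hsinj
  have hb1 : 1 ≤ Module.rank R ↥(LinearMap.range s) := by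
    rw [← equiv2.rank_eq]
    exact Cardinal.one_le_iff_pos.mpr rank_pos
  have hka : Module.rank R ↥(LinearMap.ker f) ≤ Module.rank R M := Submodule.rank_le _
  have hkfin : Module.rank R ↥(LinearMap.ker f) < Cardinal.aleph0 := lt_of_le_of_lt hka hrk
  obtain ⟨n, hn⟩ := Cardinal.lt_aleph0.mp hkfin
  have hklt : Module.rank R ↥(LinearMap.ker f) < Module.rank R M := by
    calc Module.rank R ↥(LinearMap.ker f) < Module.rank R ↥(LinearMap.ker f) + 1 := by
          rw [hn]; exact_mod_cast Nat.lt_succ_self n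
      _ ≤ Module.rank R ↥(LinearMap.ker f) + Module.rank R ↥(LinearMap.range s) :=
          add_le_add (le_refl _) hb1
      _ = Module.rank R ↥(LinearMap.range s) + Module.rank R ↥(LinearMap.ker f) := add_comm _ _
      _ ≤ Module.rank R M := hranks
  have hpure : IsPureSub (LinearMap.ker f) := by
    rintro r x hx ⟨g, rfl⟩
    rw [hkerf] at hx ⊢
    rw [LinearMap.mem_ker] at hx
    by_cases hg : φ g = 0
    · exact ⟨g, hg, rfl⟩
    · have : r • φ g = 0 := by rw [← map_smul]; exact hx
      rcases smul_eq_zero.mp this with hr | hg'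
      · exact ⟨0, by simp, by rw [hr, zero_smul, zero_smul]⟩
      · exact absurd hg' hg
  have hkfree : Module.Free R ↥(LinearMap.ker f) := hmin _ hpure hklt
  have hsfree : Module.Free R ↥(LinearMap.range s) := Module.Free.of_equiv equiv2
  exact hnf (Module.Free.of_equiv equiv1)

lemma noZeroSMulDivisorsAux {R : Type u} [CommRing R] [IsDomain R] {G : Type v}
    [AddCommGroup G] [Module R G] (hfree : Aleph1Free R G) : NoZeroSMulDivisors R G := by
  refine ⟨fun {r g} hrg => ?_⟩
  by_contra hcon
  push_neg at hcon
  obtain ⟨hr, hg⟩ := hcon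
  haveI hN : Module.Free R ↥(Submodule.span R ({g} : Set G)) :=
    hfree _ ⟨{g}, Set.countable_singleton g, rfl⟩
  set y : ↥(Submodule.span R ({g} : Set G)) := ⟨g, Submodule.mem_span_singleton_self g⟩ with hy
  have hzy : r • y = 0 := Subtype.ext (by simpa [hy] using hrg)
  rcases smul_eq_zero.mp hzy with h | h
  · exact hr h
  · exact hg (congrArg Subtype.val h)

end Aux

set_option maxHeartbeats 1000000 in
set_option synthInstance.maxHeartbeats 200000 in
/-- Uniqueness of extensions of splitting maps along a type I filtration. -/
theorem stmt11 (R : Subring ℚ) (G : Type*) [AddCommGroup G] [Module R G]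
    (hfree : Aleph1Free R G) (hcard : Cardinal.mk G = Cardinal.aleph 1)
    (c : Ordinal.{0} → Submodule R G) (hc : IsTypeIFiltration c)
    (H : Type*) [AddCommGroup H] [Module R H]
    (h : H →ₗ[R] G) (hsurj : Function.Surjective h)
    (e : G ≃ₗ[R] ↥(LinearMap.ker h))
    (d : Ordinal.{0} → Submodule R H)
    (hker : ∀ α < omegaOne, LinearMap.ker h ≤ d α)
    (hmono : ∀ ⦃α β : Ordinal.{0}⦄, α ≤ β → β < omegaOne → d α ≤ d β)
    (hcont : ∀ α < omegaOne, Order.IsSuccLimit α → d α = ⨆ β ∈ Set.Iio α, d β)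
    (hunion : ∀ x : H, ∃ α < omegaOne, x ∈ d α)
    (hmap : ∀ α < omegaOne, (d α).map h = c α)
    (σ σ' : G →ₗ[R] H)
    (hσ : h.comp σ = LinearMap.id) (hσ' : h.comp σ' = LinearMap.id)
    (hagree : ∀ x ∈ c 1, σ x = σ' x) :
    σ = σ' := by
  obtain ⟨filt, pf, mnf⟩ := hc
  have homega : Order.IsSuccLimit omegaOne := Cardinal.isSuccLimit_ord (Cardinal.aleph0_le_aleph 1)
  have h1ω : (1 : Ordinal) < omegaOne := by
    have h2 : (Cardinal.aleph 0).ord < (Cardinal.aleph 1).ord :=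
      Cardinal.ord_lt_ord.mpr (Cardinal.aleph_lt_aleph.mpr zero_lt_one)
    have h3 : (1 : Ordinal) < (Cardinal.aleph 0).ord := by
      rw [Cardinal.aleph_zero, Cardinal.ord_aleph0]
      exact Ordinal.one_lt_omega0
    exact h3.trans h2
  haveI : NoZeroSMulDivisors R G := noZeroSMulDivisorsAux hfree
  set δ : G →ₗ[R] H := σ - σ' with hδdef
  have hδ : ∀ g : G, δ g ∈ LinearMap.ker h := by
    intro g
    have h1 : h (σ g) = g := LinearMap.congr_fun hσ g
    have h2 : h (σ' g) = g := LinearMap.congr_fun hσ' g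
    simp [hδdef, LinearMap.mem_ker, map_sub, h1, h2]
  set ψ : G →ₗ[R] G :=
    e.symm.toLinearMap.comp (LinearMap.codRestrict (LinearMap.ker h) δ hδ) with hψdef
  have hψδ : ∀ g : G, ψ g = 0 ↔ δ g = 0 := by
    intro g
    rw [hψdef]
    simp only [LinearMap.coe_comp, Function.comp_apply, LinearEquiv.coe_coe]
    rw [show (0 : G) = e.symm 0 by simp, e.symm.injective.eq_iff]
    constructor
    · intro hq
      have := congrArg Subtype.val hq
      simpa using this
    · intro hq
      ext
      simpa using hq
  have key : ∀ α : Ordinal.{0}, α < omegaOne → ∀ x ∈ c α, ψ x = 0 := by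
    intro α
    induction α using Ordinal.induction with
    | h α IH =>
      intro hα x hx
      have hagree' : ∀ z ∈ c 1, ψ z = 0 := by
        intro z hz
        exact (hψδ z).mpr (by simp [hδdef, sub_eq_zero, hagree z hz])
      rcases Ordinal.zero_or_succ_or_isSuccLimit α with hz | ⟨β, hβeq⟩ | hlim
      · subst hz
        exact hagree' x (filt.mono (zero_le (a := (1 : Ordinal))) h1ω hx)
      · have hβlt : β < α := by rw [← hβeq]; exact Order.lt_succ β
        have hβω : β < omegaOne := hβlt.trans hα
        have hβ1 : α = β + 1 := by rw [← hβeq, Ordinal.add_one_eq_succ]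
        by_cases hβ0 : β = 0
        · subst hβ0
          rw [hβ1, zero_add] at hx
          exact hagree' x hx
        · have hβpos : 0 < β := pos_iff_ne_zero.mpr hβ0
          have hIH : ∀ z ∈ c β, ψ z = 0 := IH β hβlt hβω
          have hmnf : MinimalNonFree R (SubQuot (c β) (c (β + 1))) := mnf β hβpos hβω
          set N : Submodule R ↥(c (β + 1)) := (c β).comap (c (β + 1)).subtype with hN
          set f : ↥(c (β + 1)) →ₗ[R] G := ψ.comp (c (β + 1)).subtype with hfdef
          have hNf : N ≤ LinearMap.ker f := by
            intro z hz
            rw [LinearMap.mem_ker, hfdef]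
            exact hIH z.val hz
          set φq : SubQuot (c β) (c (β + 1)) →ₗ[R] G := N.liftQ f hNf with hφq
          have hα1 : β + 1 < omegaOne := by rw [← hβ1]; exact hα
          have hrange : Module.Free R ↥(LinearMap.range φq) := by
            have h1 : LinearMap.range φq = Submodule.map ψ (c (β + 1)) := by
              rw [hφq, Submodule.range_liftQ, hfdef, LinearMap.range_comp,
                Submodule.range_subtype]
            rw [h1]
            exact hfree _ ⟨ψ '' (c (β + 1) : Set G),
              (filt.countable _ hα1).image ψ,
              by rw [← Submodule.map_coe, Submodule.span_eq]⟩
          have hzero : φq = 0 := homEqZeroAux hmnf φq hrange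
          have hf0 : f = 0 := by
            rw [← N.liftQ_mkQ f hNf, ← hφq, hzero, LinearMap.zero_comp]
          rw [hβ1] at hx
          have : f ⟨x, hx⟩ = 0 := by rw [hf0]; rfl
          simpa [hfdef] using this
      · rw [filt.continuous α hα hlim] at hx
        haveI : Nonempty (Set.Iio α) := ⟨⟨0, hlim.bot_lt⟩⟩
        have hdir : Directed (· ≤ ·) (fun β : Set.Iio α => c β.val) := by
          intro i j
          rcases le_total i.val j.val with hij | hij
          · exact ⟨j, filt.mono hij (j.2.trans hα), le_refl _⟩
          · exact ⟨i, le_refl _, filt.mono hij (i.2.trans hα)⟩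
        have hle : (⨆ β ∈ Set.Iio α, c β) ≤ ⨆ β : Set.Iio α, c β.val :=
          iSup₂_le fun β hβ => le_iSup (fun b : Set.Iio α => c b.val) ⟨β, hβ⟩
        obtain ⟨⟨β, hβα⟩, hxm⟩ := (Submodule.mem_iSup_of_directed _ hdir).mp (hle hx)
        exact IH β hβα (hβα.trans hα) x hxm
  ext g
  obtain ⟨α, hα, hg⟩ := filt.union g
  have := (hψδ g).mp (key α hα g hg)
  rw [hδdef] at this
  exact sub_eq_zero.mp (by simpa using this)
end
end

section
/- Let R be a subring of ℚ and G an R-module. Then every short exact sequence of R-modules 0 → G → X → G → 0 splits if and only if every short exact sequence of abelian groups 0 → G → X → G → 0 splits; that is, Ext¹_R(G,G) = 0 if and only if Ext¹_ℤ(G,G) = 0. -/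
noncomputable section

open Cardinal

universe u v

variable {R : Type u} [CommRing R] {G : Type v} [AddCommGroup G] [Module R G]

namespace Stmt18Aux

/-- `b` is a good denominator for `R`: positive and invertible in `R`. -/
def Good (R : Subring ℚ) (b : ℤ) : Prop := 0 < b ∧ ∃ s : R, (s : ℚ) * (b : ℚ) = 1

variable {R : Subring ℚ}

lemma Good.mul {b b' : ℤ} (h : Good R b) (h' : Good R b') : Good R (b * b') := by
  obtain ⟨hb, s, hs⟩ := h
  obtain ⟨hb', s', hs'⟩ := h'
  refine ⟨mul_pos hb hb', ⟨s * s', ?_⟩⟩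
  push_cast
  calc (s : ℚ) * s' * (b * b') = ((s:ℚ) * b) * ((s':ℚ) * b') := by ring
  _ = 1 := by rw [hs, hs']; ring

lemma exists_rep (r : R) : ∃ a b : ℤ, Good R b ∧ (r : ℚ) * (b : ℚ) = (a : ℚ) := by
  have hden : ((r:ℚ).den : ℚ) ≠ 0 := by exact_mod_cast (r:ℚ).den_nz
  have hqd : (r:ℚ) * ((r:ℚ).den : ℚ) = (r:ℚ).num :=
    ((div_eq_iff hden).mp (Rat.num_div_den (r:ℚ))).symm
  refine ⟨(r:ℚ).num, ((r:ℚ).den : ℤ), ⟨?_, ?_⟩, by exact_mod_cast hqd⟩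
  · exact_mod_cast (r:ℚ).pos
  · have hco : IsCoprime (r:ℚ).num ((r:ℚ).den : ℤ) := by
      rw [Int.isCoprime_iff_gcd_eq_one]
      simpa [Int.gcd] using (r:ℚ).reduced
    obtain ⟨u, v, huv⟩ := hco
    refine ⟨⟨(u : ℚ) * (r:ℚ) + (v : ℚ), ?_⟩, ?_⟩
    · exact R.add_mem (R.mul_mem (intCast_mem R u) r.2) (intCast_mem R v)
    · push_cast
      have h1 : ((u : ℚ) * (r:ℚ) + v) * (r:ℚ).den
          = u * ((r:ℚ) * (r:ℚ).den) + v * (r:ℚ).den := by ring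
      rw [h1, hqd]
      have h2 : (u:ℚ) * (r:ℚ).num + v * (r:ℚ).den
          = ((u * (r:ℚ).num + v * ((r:ℚ).den : ℤ) : ℤ) : ℚ) := by push_cast; ring
      rw [h2, huv]
      norm_num

/-- In `R`, a good-denominator relation `r * b = a` holds. -/
lemma rep_eq {r : R} {a b : ℤ} (h : (r : ℚ) * (b : ℚ) = (a : ℚ)) :
    r * ((b : ℤ) : R) = ((a : ℤ) : R) := by
  apply Subtype.ext
  push_cast
  exact h

section ModuleFacts
variable {M : Type*} [AddCommGroup M] [Module R M]

lemma good_bijective {b : ℤ} (h : Good R b) :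
    Function.Bijective (fun x : M => b • x) := by
  obtain ⟨hb, s, hs⟩ := h
  have key : ∀ x : M, s • ((b : ℤ) • x) = x := by
    intro x
    rw [← Int.cast_smul_eq_zsmul R b x, ← mul_smul]
    have hsb : s * ((b : ℤ) : R) = 1 := by apply Subtype.ext; push_cast; exact hs
    rw [hsb, one_smul]
  constructor
  · intro x y hxy
    have := congrArg (fun z => s • z) hxy
    simpa [key] using this
  · intro x
    refine ⟨s • x, ?_⟩
    simp only
    rw [← Int.cast_smul_eq_zsmul R b (s • x), ← mul_smul, mul_comm, mul_smul,
      Int.cast_smul_eq_zsmul R b x, key]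

lemma good_inj {b : ℤ} (h : Good R b) {x y : M} (hxy : b • x = b • y) : x = y :=
  (good_bijective (M := M) h).injective hxy

/-- spec of smul on an existing module. -/
lemma module_spec {r : R} {a b : ℤ} (h : (r : ℚ) * (b : ℚ) = (a : ℚ)) (x : M) :
    b • (r • x) = a • x := by
  rw [← Int.cast_smul_eq_zsmul R b (r • x), ← mul_smul, mul_comm, rep_eq h,
    Int.cast_smul_eq_zsmul]

/-- Additive maps between `R`-modules are `R`-linear. -/
lemma addHom_smul {N : Type*} [AddCommGroup N] [Module R N] (f : M →+ N) (r : R) (x : M) :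
    f (r • x) = r • f x := by
  obtain ⟨a, b, hb, hr⟩ := exists_rep r
  apply good_inj (M := N) hb
  rw [← map_zsmul f b, module_spec hr, module_spec hr, map_zsmul]

end ModuleFacts

section BuildModule
variable {X : Type*} [AddCommGroup X]
variable (R)

noncomputable def theSMul (hbij : ∀ b : ℤ, Good R b → Function.Bijective fun x : X => b • x)
    (r : R) : X →+ X :=
  ((AddEquiv.ofBijective (zsmulAddGroupHom (exists_rep r).choose_spec.choose)
      (hbij _ (exists_rep r).choose_spec.choose_spec.1)).symm.toAddMonoidHom).comp
    (zsmulAddGroupHom (exists_rep r).choose)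

variable {R}

lemma theSMul_chosen_spec (hbij : ∀ b : ℤ, Good R b → Function.Bijective fun x : X => b • x) (r : R) (x : X) :
    (exists_rep r).choose_spec.choose • theSMul R hbij r x = (exists_rep r).choose • x :=
  (AddEquiv.ofBijective (zsmulAddGroupHom (exists_rep r).choose_spec.choose)
      (hbij _ (exists_rep r).choose_spec.choose_spec.1)).apply_symm_apply
    ((exists_rep r).choose • x)

lemma theSMul_spec (hbij : ∀ b : ℤ, Good R b → Function.Bijective fun x : X => b • x)
    {r : R} {a b : ℤ} (hb : Good R b) (h : (r : ℚ) * (b : ℚ) = (a : ℚ)) (x : X) :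
    b • theSMul R hbij r x = a • x := by
  obtain ⟨a₀, b₀, hb₀, h₀, hch⟩ :
      ∃ a₀ b₀ : ℤ, Good R b₀ ∧ (r : ℚ) * (b₀ : ℚ) = (a₀ : ℚ) ∧
        ∀ y : X, b₀ • theSMul R hbij r y = a₀ • y :=
    ⟨_, _, (exists_rep r).choose_spec.choose_spec.1,
      (exists_rep r).choose_spec.choose_spec.2, fun y => theSMul_chosen_spec hbij r y⟩
  have hmul : b * a₀ = b₀ * a := by
    have : (b : ℚ) * a₀ = (b₀ : ℚ) * a := by rw [← h₀, ← h]; ring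
    exact_mod_cast this
  apply (hbij b₀ hb₀).injective
  simp only
  rw [smul_comm b₀ b, hch x, smul_comm b₀ a, ← mul_smul, ← mul_smul, hmul, mul_comm b₀ a]

lemma good_inj' (hbij : ∀ b : ℤ, Good R b → Function.Bijective fun x : X => b • x)
    {b : ℤ} (hb : Good R b) {x y : X} (hxy : b • x = b • y) : x = y :=
  (hbij b hb).injective hxy

noncomputable def goodModule
    (hbij : ∀ b : ℤ, Good R b → Function.Bijective fun x : X => b • x) : Module R X where
  smul r x := theSMul R hbij r x
  one_smul x := by
    obtain ⟨a, b, hb, h⟩ := exists_rep (1 : R)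
    have hab : a = b := by
      have : (a : ℚ) = (b : ℚ) := by rw [← h]; push_cast; ring
      exact_mod_cast this
    apply good_inj' hbij hb
    show b • theSMul R hbij 1 x = b • x
    rw [theSMul_spec hbij hb h, hab]
  mul_smul r r' x := by
    obtain ⟨a, b, hb, h⟩ := exists_rep r
    obtain ⟨a', b', hb', h'⟩ := exists_rep r'
    have hbb := hb.mul hb'
    have hrr : ((r * r' : R) : ℚ) * ((b * b' : ℤ) : ℚ) = ((a * a' : ℤ) : ℚ) := by
      push_cast
      calc (r:ℚ) * r' * (b * b') = ((r:ℚ) * b) * ((r':ℚ) * b') := by ring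
      _ = (a:ℚ) * a' := by rw [h, h']
    apply good_inj' hbij hbb
    show (b * b') • theSMul R hbij (r * r') x
      = (b * b') • theSMul R hbij r (theSMul R hbij r' x)
    have hRHS : (b * b') • theSMul R hbij r (theSMul R hbij r' x) = (a * a') • x := by
      rw [mul_smul, smul_comm b b', theSMul_spec hbij hb h, smul_comm b' a,
        theSMul_spec hbij hb' h', ← mul_smul]
    rw [theSMul_spec hbij hbb hrr, hRHS]
  smul_zero r := map_zero (theSMul R hbij r)
  smul_add r x y := map_add (theSMul R hbij r) x y
  add_smul r r' x := by
    obtain ⟨a, b, hb, h⟩ := exists_rep r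
    obtain ⟨a', b', hb', h'⟩ := exists_rep r'
    have hbb := hb.mul hb'
    have hrr : ((r + r' : R) : ℚ) * ((b * b' : ℤ) : ℚ) = ((a * b' + a' * b : ℤ) : ℚ) := by
      push_cast
      calc ((r:ℚ) + r') * (b * b') = ((r:ℚ) * b) * b' + ((r':ℚ) * b') * b := by ring
      _ = (a:ℚ) * b' + (a':ℚ) * b := by rw [h, h']
    apply good_inj' hbij hbb
    show (b * b') • theSMul R hbij (r + r')  x
      = (b * b') • (theSMul R hbij r x + theSMul R hbij r' x)
    have h1 : (b * b') • theSMul R hbij r x = (a * b') • x := by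
      rw [mul_comm b b', mul_smul, theSMul_spec hbij hb h, ← mul_smul, mul_comm b' a]
    have h2 : (b * b') • theSMul R hbij r' x = (a' * b) • x := by
      rw [mul_smul, theSMul_spec hbij hb' h', ← mul_smul, mul_comm b a']
    rw [theSMul_spec hbij hbb hrr, smul_add, h1, h2, add_smul]
  zero_smul x := by
    obtain ⟨a, b, hb, h⟩ := exists_rep (0 : R)
    have ha : a = 0 := by
      have : (a : ℚ) = 0 := by rw [← h]; push_cast; ring
      exact_mod_cast this
    apply good_inj' hbij hb
    show b • theSMul R hbij 0 x = b • (0 : X)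
    rw [theSMul_spec hbij hb h, ha, zero_smul, smul_zero]

lemma goodModule_smul_def (hbij : ∀ b : ℤ, Good R b → Function.Bijective fun x : X => b • x)
    (r : R) (x : X) :
    (letI := goodModule hbij; r • x) = theSMul R hbij r x := rfl

end BuildModule

end Stmt18Aux


open Stmt18Aux in
/-- `Ext¹_R(G,G) = 0` if and only if `Ext¹_ℤ(G,G) = 0`: an `R`-module is a splitter
as an `R`-module iff it is a splitter as an abelian group. -/
theorem stmt18 (R : Subring ℚ) (G : Type*) [AddCommGroup G] [Module R G] :
    IsSplitter R G ↔ IsGroupSplitter G := by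
  constructor
  · -- R-splitter → group splitter
    intro h X _ β α hβ hα hr
    have hbijG : ∀ b : ℤ, Good R b → Function.Bijective fun g : G => b • g :=
      fun b hb => good_bijective hb
    have hbijX : ∀ b : ℤ, Good R b → Function.Bijective fun x : X => b • x := by
      intro b hb
      constructor
      · intro x y hxy
        simp only at hxy
        have h2 : α x = α y := by
          apply (hbijG b hb).injective
          show b • α x = b • α y
          rw [← map_zsmul, ← map_zsmul, hxy]
        have h3 : x - y ∈ α.ker := by
          rw [AddMonoidHom.mem_ker, map_sub, h2, sub_self]
        rw [← hr] at h3
        obtain ⟨g, hg⟩ := h3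
        have h5 : b • g = 0 := by
          apply hβ
          rw [map_zsmul, hg, map_zero]
          rw [smul_sub, hxy, sub_self]
        have h6 : g = 0 := by
          apply (hbijG b hb).injective
          show b • g = b • (0 : G)
          rw [h5, smul_zero]
        have : x - y = 0 := by rw [← hg, h6, map_zero]
        exact sub_eq_zero.mp this
      · intro x
        obtain ⟨g₁, hg₁⟩ := (hbijG b hb).surjective (α x)
        simp only at hg₁
        obtain ⟨x₁, hx₁⟩ := hα g₁
        have h3 : x - b • x₁ ∈ α.ker := by
          rw [AddMonoidHom.mem_ker, map_sub, map_zsmul, hx₁, hg₁, sub_self]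
        rw [← hr] at h3
        obtain ⟨g₂, hg₂⟩ := h3
        obtain ⟨g₃, hg₃⟩ := (hbijG b hb).surjective g₂
        simp only at hg₃
        refine ⟨x₁ + β g₃, ?_⟩
        show b • (x₁ + β g₃) = x
        rw [smul_add, ← map_zsmul, hg₃, hg₂]
        abel
    letI instX : Module R X := goodModule hbijX
    have specX : ∀ (r : R) {a b : ℤ}, Good R b → (r : ℚ) * (b : ℚ) = (a : ℚ) →
        ∀ x : X, b • (r • x) = a • x := fun r _ _ hb hrb x => theSMul_spec hbijX hb hrb x
    have βsmul : ∀ (r : R) (g : G), β (r • g) = r • β g := by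
      intro r g
      obtain ⟨a, b, hb, hrb⟩ := exists_rep r
      apply good_inj' hbijX hb
      have h1 : b • β (r • g) = a • β g := by
        rw [← map_zsmul, module_spec hrb, map_zsmul]
      rw [h1, specX r hb hrb (β g)]
    have αsmul : ∀ (r : R) (x : X), α (r • x) = r • α x := by
      intro r x
      obtain ⟨a, b, hb, hrb⟩ := exists_rep r
      apply good_inj (M := G) hb
      have h1 : b • α (r • x) = a • α x := by
        rw [← map_zsmul, specX r hb hrb x, map_zsmul]
      rw [h1, module_spec hrb]
    set βₗ : G →ₗ[R] X := { toFun := β, map_add' := β.map_add, map_smul' := fun r g => βsmul r g }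
      with hβₗ
    set αₗ : X →ₗ[R] G := { toFun := α, map_add' := α.map_add, map_smul' := fun r x => αsmul r x }
      with hαₗ
    have hrange : LinearMap.range βₗ = LinearMap.ker αₗ := by
      ext x
      have := SetLike.ext_iff.mp hr x
      simp only [AddMonoidHom.mem_range, AddMonoidHom.mem_ker] at this
      simp only [LinearMap.mem_range, LinearMap.mem_ker, hβₗ, hαₗ, LinearMap.coe_mk,
        AddHom.coe_mk]
      exact this
    obtain ⟨γ, hγ⟩ := h X βₗ αₗ hβ hα hrange
    refine ⟨γ.toAddMonoidHom, ?_⟩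
    ext g
    exact LinearMap.ext_iff.mp hγ g
  · -- group splitter → R-splitter
    intro h X _ _ β α hβ hα hr
    have hr' : β.toAddMonoidHom.range = α.toAddMonoidHom.ker := by
      ext x
      have := SetLike.ext_iff.mp hr x
      simp only [LinearMap.mem_range, LinearMap.mem_ker] at this
      simpa only [AddMonoidHom.mem_range, AddMonoidHom.mem_ker, LinearMap.toAddMonoidHom_coe]
        using this
    obtain ⟨γ, hγ⟩ := h X β.toAddMonoidHom α.toAddMonoidHom hβ hα hr'
    refine ⟨{ toFun := γ, map_add' := γ.map_add, map_smul' := fun r x => addHom_smul γ r x }, ?_⟩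
    ext g
    exact DFunLike.congr_fun hγ g
end
end
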